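/- Subadditivity of the minimal kernel dimension: Let G_1 and G_2 be k-QSAT interaction hypergraphs on the same N qubits, and let G_1 ∪ G_2 denote the hypergraph whose clause list is the concatenation of the two clause lists. Writing R(G) := min over all choices of clause vectors φ of dim ker H_φ, one has R(G_1 ∪ G_2) · 2^N ≤ R(G_1) · R(G_2). -/

import Mathlib

open scoped BigOperators

noncomputable section

/-- The matrix of the rank-one projector `|φ⟩⟨φ|` acting on the qubits in the
`k`-element set `S` and as the identity on the remaining qubits. -/
def clauseProj {N : ℕ} (S : Finset (Fin N)) (φ : ({i // i ∈ S} → Fin 2) → ℂ) :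
    Matrix (Fin N → Fin 2) (Fin N → Fin 2) ℂ :=
  fun σ τ =>
    (if ∀ i : Fin N, i ∉ S → σ i = τ i then (1 : ℂ) else 0) *
      φ (fun i => σ i.1) * (starRingEnd ℂ) (φ (fun i => τ i.1))

/-- The `k`-QSAT Hamiltonian `H_φ = ∑ m, Π_m` associated to the interaction
hypergraph `S : Fin M → Finset (Fin N)` and the clause vectors `φ m`. -/
def qsatHam {N M : ℕ} (S : Fin M → Finset (Fin N))
    (φ : ∀ m, ({i // i ∈ S m} → Fin 2) → ℂ) :
    Matrix (Fin N → Fin 2) (Fin N → Fin 2) ℂ :=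
  ∑ m, clauseProj (S m) (φ m)

/-- `φ` is a unit vector. -/
def IsUnitVec {α : Type*} [Fintype α] (φ : α → ℂ) : Prop :=
  ∑ x, Complex.normSq (φ x) = 1

/-- The dimension of the zero-energy eigenspace `ker H_φ`. -/
def kerDim {N M : ℕ} (S : Fin M → Finset (Fin N))
    (φ : ∀ m, ({i // i ∈ S m} → Fin 2) → ℂ) : ℕ :=
  Module.finrank ℂ (LinearMap.ker (Matrix.mulVecLin (qsatHam S φ)))

namespace QSatAux
open Matrix

variable {N : ℕ}

/-! ### Signs and Weyl operators -/

/-- the sign `(-1)^{b·σ}` -/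
def sgn (b σ : Fin N → Fin 2) : ℂ := ∏ i, (-1 : ℂ) ^ ((b i * σ i : Fin 2) : ℕ)

lemma neg_one_pow_fin_add (x y : Fin 2) :
    (-1 : ℂ) ^ ((x + y : Fin 2) : ℕ) = (-1 : ℂ) ^ (x : ℕ) * (-1 : ℂ) ^ (y : ℕ) := by
  fin_cases x <;> fin_cases y <;> simp [show ((2:Fin 2):ℕ) = 0 from rfl]

lemma sgn_mul_sgn (b σ τ : Fin N → Fin 2) : sgn b σ * sgn b τ = sgn b (σ + τ) := by
  rw [sgn, sgn, sgn, ← Finset.prod_mul_distrib]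
  refine Finset.prod_congr rfl fun i _ => ?_
  rw [Pi.add_apply, mul_add, neg_one_pow_fin_add]

lemma sgn_zero (b : Fin N → Fin 2) : sgn b (0 : Fin N → Fin 2) = 1 := by
  simp [sgn]

lemma sgn_sq (b σ : Fin N → Fin 2) : sgn b σ * sgn b σ = 1 := by
  rw [sgn_mul_sgn]
  have h : σ + σ = 0 := by
    funext i; have h2 : ∀ x : Fin 2, x + x = 0 := by decide
    exact h2 (σ i)
  rw [h, sgn_zero]

lemma sgn_add_left (b d σ : Fin N → Fin 2) : sgn (b + d) σ = sgn b σ * sgn d σ := by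
  rw [sgn, sgn, sgn, ← Finset.prod_mul_distrib]
  refine Finset.prod_congr rfl fun i _ => ?_
  rw [Pi.add_apply, add_mul, neg_one_pow_fin_add]

lemma conj_sgn (b σ : Fin N → Fin 2) : (starRingEnd ℂ) (sgn b σ) = sgn b σ := by
  rw [sgn, map_prod]
  refine Finset.prod_congr rfl fun i _ => ?_
  rw [map_pow, map_neg, _root_.map_one]

lemma sum_sgn (τ : Fin N → Fin 2) :
    ∑ b : Fin N → Fin 2, sgn b τ = if τ = 0 then ((2 : ℂ) ^ N) else 0 := by
  by_cases h : τ = 0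
  · subst h
    simp [sgn_zero, Finset.card_univ, Fintype.card_fun]
  · rw [if_neg h]
    obtain ⟨i0, hi0⟩ : ∃ i, τ i ≠ 0 := by
      by_contra hc; push_neg at hc; exact h (funext hc)
    set d : Fin N → Fin 2 := Pi.single i0 1 with hd
    have hsd : sgn d τ = -1 := by
      rw [sgn]
      rw [Finset.prod_eq_single i0]
      · have h1 : τ i0 = 1 := by omega
        simp [hd, h1]
      · intro i _ hne
        simp [hd, Pi.single_eq_of_ne hne]
      · simp
    have key : ∑ b : Fin N → Fin 2, sgn b τ = ∑ b : Fin N → Fin 2, sgn (b + d) τ :=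
      (Fintype.sum_equiv (Equiv.addRight d) _ _ (fun b => rfl)).symm
    have key2 : ∑ b : Fin N → Fin 2, sgn (b + d) τ
        = -∑ b : Fin N → Fin 2, sgn b τ := by
      rw [← Finset.sum_neg_distrib]
      refine Finset.sum_congr rfl fun b _ => ?_
      rw [sgn_add_left, hsd]; ring
    have := key.trans key2
    linear_combination this / 2

/-- Weyl-type signed permutation matrix. -/
def Wm (a b : Fin N → Fin 2) : Matrix (Fin N → Fin 2) (Fin N → Fin 2) ℂ :=
  Matrix.of fun σ τ => if τ = σ + a then sgn b σ else 0

lemma add_add_cancel' (σ a : Fin N → Fin 2) : σ + a + a = σ := by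
  funext i
  have h : ∀ x y : Fin 2, x + y + y = x := by decide
  exact h (σ i) (a i)

lemma Wm_conj_apply (a b : Fin N → Fin 2) (A : Matrix (Fin N → Fin 2) (Fin N → Fin 2) ℂ)
    (σ τ : Fin N → Fin 2) :
    (Wm a b * A * (Wm a b)ᴴ) σ τ = sgn b σ * sgn b τ * A (σ + a) (τ + a) := by
  have h1 : (Wm a b * A) σ (τ + a) = sgn b σ * A (σ + a) (τ + a) := by
    rw [Matrix.mul_apply]
    rw [Finset.sum_eq_single (σ + a)]
    · simp [Wm]
    · intro ρ _ hρ; simp [Wm, Ne.symm hρ, hρ]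
    · simp
  rw [Matrix.mul_apply]
  rw [Finset.sum_eq_single (τ + a)]
  · rw [h1, Matrix.conjTranspose_apply, Wm]
    simp only [Matrix.of_apply, if_true]
    rw [show star (sgn b τ) = (starRingEnd ℂ) (sgn b τ) from rfl, conj_sgn]
    ring
  · intro ρ _ hρ
    rw [Matrix.conjTranspose_apply, Wm]
    simp [Ne.symm hρ, hρ]
  · simp

lemma Wm_mul_WmH (a b : Fin N → Fin 2) : Wm a b * (Wm a b)ᴴ = 1 := by
  ext σ τ
  have h := Wm_conj_apply a b 1 σ τ
  rw [Matrix.mul_one] at h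
  rw [h]
  by_cases hστ : σ = τ
  · subst hστ; simp [Matrix.one_apply, sgn_sq]
  · have hne : ¬ (σ + a = τ + a) := fun hc => hστ (by
      have := congrArg (fun x => x + a) hc
      simpa [add_add_cancel'] using this)
    simp [Matrix.one_apply, hστ, hne]

lemma WmH_mul_Wm (a b : Fin N → Fin 2) : (Wm a b)ᴴ * Wm a b = 1 :=
  mul_eq_one_comm.mp (Wm_mul_WmH a b)

/-! ### Frobenius norm machinery -/

/-- Frobenius norm squared. -/
def frob {m n : Type*} [Fintype m] [Fintype n] (A : Matrix m n ℂ) : ℝ :=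
  ∑ i, ∑ j, Complex.normSq (A i j)

lemma frob_nonneg {m n : Type*} [Fintype m] [Fintype n] (A : Matrix m n ℂ) : 0 ≤ frob A :=
  Finset.sum_nonneg fun _ _ => Finset.sum_nonneg fun _ _ => Complex.normSq_nonneg _

lemma trace_conjTranspose_mul {m n : Type*} [Fintype m] [Fintype n] (A : Matrix m n ℂ) :
    Matrix.trace (Aᴴ * A) = (frob A : ℂ) := by
  rw [Matrix.trace, frob]
  push_cast
  rw [Finset.sum_comm]
  refine Finset.sum_congr rfl fun i _ => ?_
  rw [Matrix.diag_apply, Matrix.mul_apply]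
  refine Finset.sum_congr rfl fun j _ => ?_
  rw [Matrix.conjTranspose_apply, Complex.normSq_eq_conj_mul_self]
  rfl

lemma frob_one (r : ℕ) : frob (1 : Matrix (Fin r) (Fin r) ℂ) = r := by
  rw [frob]
  have h : ∀ i : Fin r, ∑ j, Complex.normSq ((1 : Matrix (Fin r) (Fin r) ℂ) i j) = 1 := by
    intro i
    rw [Finset.sum_eq_single i]
    · simp [Matrix.one_apply]
    · intro j _ hji; simp [Matrix.one_apply, Ne.symm hji]
    · simp
  simp [h]

lemma frob_mul_left {m n o : Type*} [Fintype m] [Fintype n] [Fintype o]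
    [DecidableEq m] [DecidableEq n]
    (C : Matrix m n ℂ) (hC : C * Cᴴ = 1) (M : Matrix n o ℂ) :
    frob (C * M) ≤ frob M := by
  have hQH : (Cᴴ * C)ᴴ = Cᴴ * C := by
    rw [Matrix.conjTranspose_mul, Matrix.conjTranspose_conjTranspose]
  set Q : Matrix n n ℂ := Cᴴ * C with hQ
  have hQ2 : Q * Q = Q := by
    rw [hQ, Matrix.mul_assoc Cᴴ C (Cᴴ * C), ← Matrix.mul_assoc C Cᴴ C, hC, Matrix.one_mul]
  have hRH : ((1 : Matrix n n ℂ) - Q)ᴴ = 1 - Q := by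
    rw [Matrix.conjTranspose_sub, Matrix.conjTranspose_one, hQH]
  have hP : ((1 : Matrix n n ℂ) - Q) * (1 - Q) = 1 - Q := by
    rw [sub_mul, one_mul, mul_sub, mul_one, hQ2]; abel
  have h1 : (C * M)ᴴ * (C * M) = Mᴴ * (Q * M) := by
    rw [Matrix.conjTranspose_mul, hQ, Matrix.mul_assoc Mᴴ Cᴴ (C * M),
      ← Matrix.mul_assoc Cᴴ C M]
  have h2 : ((1 - Q) * M)ᴴ * ((1 - Q) * M) = Mᴴ * M - Mᴴ * (Q * M) := by
    rw [Matrix.conjTranspose_mul, hRH, Matrix.mul_assoc Mᴴ (1 - Q) ((1 - Q) * M),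
      ← Matrix.mul_assoc (1 - Q) (1 - Q) M, hP, Matrix.sub_mul, Matrix.one_mul,
      Matrix.mul_sub]
  have key : (frob M : ℂ) = (frob (C * M) : ℂ) + (frob ((1 - Q) * M) : ℂ) := by
    rw [← trace_conjTranspose_mul, ← trace_conjTranspose_mul, ← trace_conjTranspose_mul,
      h1, h2, Matrix.trace_sub]
    ring
  have key' : frob M = frob (C * M) + frob ((1 - Q) * M) := by exact_mod_cast key
  linarith [frob_nonneg ((1 - Q) * M)]

lemma frob_mul_right {m n o : Type*} [Fintype m] [Fintype n] [Fintype o]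
    [DecidableEq n] [DecidableEq o]
    (D : Matrix n o ℂ) (hD : Dᴴ * D = 1) (M : Matrix m n ℂ) :
    frob (M * D) ≤ frob M := by
  have hQH : (D * Dᴴ)ᴴ = D * Dᴴ := by
    rw [Matrix.conjTranspose_mul, Matrix.conjTranspose_conjTranspose]
  set Q : Matrix n n ℂ := D * Dᴴ with hQ
  have hQ2 : Q * Q = Q := by
    rw [hQ, Matrix.mul_assoc D Dᴴ (D * Dᴴ), ← Matrix.mul_assoc Dᴴ D Dᴴ, hD, Matrix.one_mul]
  have hRH : ((1 : Matrix n n ℂ) - Q)ᴴ = 1 - Q := by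
    rw [Matrix.conjTranspose_sub, Matrix.conjTranspose_one, hQH]
  have hP : ((1 : Matrix n n ℂ) - Q) * (1 - Q) = 1 - Q := by
    rw [sub_mul, one_mul, mul_sub, mul_one, hQ2]; abel
  have h1 : Matrix.trace ((M * D)ᴴ * (M * D)) = Matrix.trace (Mᴴ * M * Q) := by
    rw [Matrix.conjTranspose_mul, Matrix.mul_assoc Dᴴ Mᴴ (M * D), Matrix.trace_mul_comm,
      ← Matrix.mul_assoc Mᴴ M D, Matrix.mul_assoc (Mᴴ * M) D Dᴴ, hQ]
  have h2 : Matrix.trace ((M * (1 - Q))ᴴ * (M * (1 - Q)))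
      = Matrix.trace (Mᴴ * M) - Matrix.trace (Mᴴ * M * Q) := by
    rw [Matrix.conjTranspose_mul, hRH, Matrix.mul_assoc (1 - Q) Mᴴ (M * (1 - Q)),
      Matrix.trace_mul_comm, ← Matrix.mul_assoc Mᴴ M (1 - Q),
      Matrix.mul_assoc (Mᴴ * M) (1 - Q) (1 - Q), hP, Matrix.mul_sub, Matrix.mul_one,
      Matrix.trace_sub]
  have key : (frob M : ℂ) = (frob (M * D) : ℂ) + (frob (M * (1 - Q)) : ℂ) := by
    rw [← trace_conjTranspose_mul, ← trace_conjTranspose_mul, ← trace_conjTranspose_mul,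
      h1, h2]
    ring
  have key' : frob M = frob (M * D) + frob (M * (1 - Q)) := by exact_mod_cast key
  linarith [frob_nonneg (M * (1 - Q))]

lemma frob_lower {I J : Type*} [Fintype I] [Fintype J] [DecidableEq I] [DecidableEq J] {r : ℕ}
    (C : Matrix (Fin r) I ℂ) (D : Matrix J (Fin r) ℂ) (M : Matrix I J ℂ)
    (hC : C * Cᴴ = 1) (hD : Dᴴ * D = 1) (hCMD : C * M * D = 1) :
    (r : ℝ) ≤ frob M := by
  have h1 : frob (C * M * D) = r := by rw [hCMD, frob_one]
  have h2 : frob (C * (M * D)) ≤ frob (M * D) := frob_mul_left C hC (M * D)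
  have h3 : frob (M * D) ≤ frob M := frob_mul_right D hD M
  rw [← Matrix.mul_assoc] at h2
  linarith [h1 ▸ h2]

/-! ### Clause projector structure -/

/-- The `B` matrix with `Bᴴ * B = clauseProj S φ`. -/
def Bmat (S : Finset (Fin N)) (φ : ({i // i ∈ S} → Fin 2) → ℂ) :
    Matrix ({i // i ∉ S} → Fin 2) (Fin N → Fin 2) ℂ :=
  Matrix.of fun c τ =>
    (if (fun i : {i // i ∉ S} => τ i.1) = c then (1 : ℂ) else 0) *
      (starRingEnd ℂ) (φ (fun i => τ i.1))

/-- splitting a sum over configurations -/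
lemma sum_split (S : Finset (Fin N)) (F : ({i // i ∈ S} → Fin 2) → ({i // i ∉ S} → Fin 2) → ℂ) :
    ∑ τ : Fin N → Fin 2, F (fun i => τ i.1) (fun i => τ i.1)
      = ∑ x : {i // i ∈ S} → Fin 2, ∑ y : {i // i ∉ S} → Fin 2, F x y := by
  have e1 : ∑ τ : Fin N → Fin 2, F (fun i => τ i.1) (fun i => τ i.1)
      = ∑ p : ({i // i ∈ S} → Fin 2) × ({i // i ∉ S} → Fin 2), F p.1 p.2 :=
    Fintype.sum_equiv (Equiv.piEquivPiSubtypeProd (fun i => i ∈ S) (fun _ => Fin 2))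
      _ _ (fun τ => rfl)
  rw [e1, Fintype.sum_prod_type]

lemma Bmat_decomp (S : Finset (Fin N)) (φ : ({i // i ∈ S} → Fin 2) → ℂ) :
    (Bmat S φ)ᴴ * Bmat S φ = clauseProj S φ := by
  ext σ τ
  rw [Matrix.mul_apply, clauseProj]
  have key : ∀ c : {i // i ∉ S} → Fin 2,
      (Bmat S φ)ᴴ σ c * Bmat S φ c τ
        = ((if (fun i : {i // i ∉ S} => σ i.1) = c then (1:ℂ) else 0) *
            (if (fun i : {i // i ∉ S} => τ i.1) = c then (1:ℂ) else 0)) *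
          (φ (fun i => σ i.1) * (starRingEnd ℂ) (φ (fun i => τ i.1))) := by
    intro c
    rw [Matrix.conjTranspose_apply, Bmat]
    simp only [Matrix.of_apply, star_mul', Complex.star_def, apply_ite (starRingEnd ℂ),
      _root_.map_one, _root_.map_zero, Complex.conj_conj]
    ring
  rw [Finset.sum_congr rfl (fun c _ => key c), ← Finset.sum_mul, mul_assoc]
  congr 1
  simp only [ite_mul, one_mul, zero_mul, Finset.sum_ite_eq, Finset.mem_univ, if_true]
  have hiff : ((fun i : {i // i ∉ S} => τ i.1) = (fun i : {i // i ∉ S} => σ i.1))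
      ↔ (∀ i : Fin N, i ∉ S → σ i = τ i) := by
    rw [funext_iff]
    constructor
    · intro h i hi; exact (h ⟨i, hi⟩).symm
    · intro h i; exact (h i.1 i.2).symm
  rw [if_congr hiff rfl rfl]

lemma Bmat_mul_BmatH (S : Finset (Fin N)) (φ : ({i // i ∈ S} → Fin 2) → ℂ)
    (hφ : IsUnitVec φ) : Bmat S φ * (Bmat S φ)ᴴ = 1 := by
  ext c c'
  rw [Matrix.mul_apply]
  have key : ∀ τ : Fin N → Fin 2,
      Bmat S φ c τ * (Bmat S φ)ᴴ τ c'
        = ((if (fun i : {i // i ∉ S} => τ i.1) = c then (1:ℂ) else 0) *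
           (if (fun i : {i // i ∉ S} => τ i.1) = c' then (1:ℂ) else 0)) *
          (Complex.normSq (φ (fun i => τ i.1)) : ℂ) := by
    intro τ
    rw [Matrix.conjTranspose_apply, Bmat]
    simp only [Matrix.of_apply, star_mul', Complex.star_def, apply_ite (starRingEnd ℂ),
      _root_.map_one, _root_.map_zero, Complex.conj_conj]
    rw [show ((Complex.normSq (φ fun i => τ i.1) : ℂ))
        = (starRingEnd ℂ) (φ fun i => τ i.1) * (φ fun i => τ i.1) from
      Complex.normSq_eq_conj_mul_self]
    ring
  rw [Finset.sum_congr rfl (fun τ _ => key τ)]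
  rw [sum_split S (fun x y => ((if y = c then (1:ℂ) else 0) * (if y = c' then (1:ℂ) else 0)) *
      (Complex.normSq (φ x) : ℂ))]
  have inner : ∀ x : {i // i ∈ S} → Fin 2,
      (∑ y : {i // i ∉ S} → Fin 2,
        ((if y = c then (1:ℂ) else 0) * (if y = c' then (1:ℂ) else 0)) *
          (Complex.normSq (φ x) : ℂ))
      = (if c = c' then (1:ℂ) else 0) * (Complex.normSq (φ x) : ℂ) := by
    intro x
    rw [Finset.sum_eq_single c]
    · simp
    · intro y _ hy; simp [hy]
    · simp
  rw [Finset.sum_congr rfl (fun x _ => inner x), ← Finset.mul_sum]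
  have hsum : (∑ x : {i // i ∈ S} → Fin 2, (Complex.normSq (φ x) : ℂ)) = 1 := by
    rw [← Complex.ofReal_sum, hφ, Complex.ofReal_one]
  rw [hsum, mul_one, Matrix.one_apply]

lemma clauseProj_hermitian (S : Finset (Fin N)) (φ : ({i // i ∈ S} → Fin 2) → ℂ) :
    (clauseProj S φ)ᴴ = clauseProj S φ := by
  rw [← Bmat_decomp, Matrix.conjTranspose_mul, Matrix.conjTranspose_conjTranspose]

lemma clauseProj_idem (S : Finset (Fin N)) (φ : ({i // i ∈ S} → Fin 2) → ℂ)
    (hφ : IsUnitVec φ) : clauseProj S φ * clauseProj S φ = clauseProj S φ := by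
  rw [← Bmat_decomp, Matrix.mul_assoc, ← Matrix.mul_assoc (Bmat S φ), Bmat_mul_BmatH S φ hφ,
    Matrix.one_mul]

/-! ### Kernel splitting -/

lemma sum_mulVec' {m ι : Type*} [Fintype m] (s : Finset ι) (A : ι → Matrix m m ℂ) (v : m → ℂ) :
    (∑ i ∈ s, A i) *ᵥ v = ∑ i ∈ s, (A i) *ᵥ v := by
  funext σ
  simp only [Matrix.mulVec, dotProduct, Finset.sum_apply, Matrix.sum_apply,
    Finset.sum_mul]
  exact Finset.sum_comm

lemma dotProduct_sum' {m ι : Type*} [Fintype m] (s : Finset ι) (u : m → ℂ) (w : ι → m → ℂ) :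
    u ⬝ᵥ (∑ i ∈ s, w i) = ∑ i ∈ s, u ⬝ᵥ w i := by
  simp only [dotProduct, Finset.sum_apply, Finset.mul_sum]
  exact Finset.sum_comm

lemma star_dot_self (v : (Fin N → Fin 2) → ℂ) :
    star v ⬝ᵥ v = ((∑ σ, Complex.normSq (v σ) : ℝ) : ℂ) := by
  rw [dotProduct]
  push_cast
  refine Finset.sum_congr rfl fun σ _ => ?_
  rw [Pi.star_apply, Complex.normSq_eq_conj_mul_self]
  rfl

lemma clause_quad (S : Finset (Fin N)) (φ : ({i // i ∈ S} → Fin 2) → ℂ) (hφ : IsUnitVec φ)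
    (v : (Fin N → Fin 2) → ℂ) :
    star v ⬝ᵥ (clauseProj S φ) *ᵥ v
      = ((∑ σ, Complex.normSq (((clauseProj S φ) *ᵥ v) σ) : ℝ) : ℂ) := by
  conv_lhs => rw [show clauseProj S φ = (clauseProj S φ)ᴴ * clauseProj S φ by
    rw [clauseProj_hermitian, clauseProj_idem S φ hφ]]
  rw [← Matrix.mulVec_mulVec, Matrix.dotProduct_mulVec, ← Matrix.star_mulVec,
    star_dot_self]

lemma ker_all_clauses {M : ℕ} (S : Fin M → Finset (Fin N))
    (φ : ∀ m, ({i // i ∈ S m} → Fin 2) → ℂ) (hφ : ∀ m, IsUnitVec (φ m))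
    (v : (Fin N → Fin 2) → ℂ) (hv : (qsatHam S φ) *ᵥ v = 0) (m : Fin M) :
    (clauseProj (S m) (φ m)) *ᵥ v = 0 := by
  have h0 : (0 : ℂ) = ∑ m', ((∑ σ, Complex.normSq (((clauseProj (S m') (φ m')) *ᵥ v) σ) : ℝ) : ℂ) := by
    have hh : star v ⬝ᵥ (qsatHam S φ) *ᵥ v = 0 := by rw [hv, dotProduct_zero]
    rw [← hh, qsatHam, sum_mulVec', dotProduct_sum']
    exact Finset.sum_congr rfl fun m' _ => clause_quad (S m') (φ m') (hφ m') v
  rw [← Complex.ofReal_sum] at h0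
  have h0' : (0 : ℝ) = ∑ m', ∑ σ, Complex.normSq (((clauseProj (S m') (φ m')) *ᵥ v) σ) := by
    exact_mod_cast h0
  have hz : ∀ m', (∑ σ, Complex.normSq (((clauseProj (S m') (φ m')) *ᵥ v) σ)) = 0 := by
    have hzz := (Finset.sum_eq_zero_iff_of_nonneg (fun m' _ =>
      Finset.sum_nonneg (fun σ _ => Complex.normSq_nonneg _))).mp h0'.symm
    exact fun m' => hzz m' (Finset.mem_univ m')
  have hzz := (Finset.sum_eq_zero_iff_of_nonneg (fun σ _ => Complex.normSq_nonneg _)).mp (hz m)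
  funext σ
  exact Complex.normSq_eq_zero.mp (hzz σ (Finset.mem_univ σ))

/-! ### Conjugation of clause projectors by Weyl operators -/

/-- sign restricted to the clause support -/
def sgnS (S : Finset (Fin N)) (b : Fin N → Fin 2) (x : {i // i ∈ S} → Fin 2) : ℂ :=
  ∏ i : {i // i ∈ S}, (-1 : ℂ) ^ ((b i.1 * x i : Fin 2) : ℕ)

lemma conj_sgnS (S : Finset (Fin N)) (b : Fin N → Fin 2) (x : {i // i ∈ S} → Fin 2) :
    (starRingEnd ℂ) (sgnS S b x) = sgnS S b x := by
  rw [sgnS, map_prod]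
  exact Finset.prod_congr rfl fun i _ => by rw [map_pow, map_neg, _root_.map_one]

lemma normSq_sgnS (S : Finset (Fin N)) (b : Fin N → Fin 2) (x : {i // i ∈ S} → Fin 2) :
    Complex.normSq (sgnS S b x) = 1 := by
  rw [sgnS, map_prod]
  refine Finset.prod_eq_one fun i _ => ?_
  rw [map_pow]
  simp

/-- splitting the product of two global signs at matching configurations -/
lemma sgn_mul_sgn_of_agree (S : Finset (Fin N)) (b σ τ : Fin N → Fin 2)
    (h : ∀ i : Fin N, i ∉ S → σ i = τ i) :
    sgn b σ * sgn b τ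
      = sgnS S b (fun i => σ i.1) * sgnS S b (fun i => τ i.1) := by
  have hσ : sgn b σ = sgnS S b (fun i => σ i.1) * ∏ i ∈ Sᶜ, (-1:ℂ) ^ ((b i * σ i : Fin 2) : ℕ) := by
    rw [sgn, sgnS, Finset.prod_coe_sort S (fun i => (-1:ℂ) ^ ((b i * σ i : Fin 2) : ℕ)),
      Finset.prod_mul_prod_compl]
  have hτ : sgn b τ = sgnS S b (fun i => τ i.1) * ∏ i ∈ Sᶜ, (-1:ℂ) ^ ((b i * τ i : Fin 2) : ℕ) := by
    rw [sgn, sgnS, Finset.prod_coe_sort S (fun i => (-1:ℂ) ^ ((b i * τ i : Fin 2) : ℕ)),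
      Finset.prod_mul_prod_compl]
  have hoff : (∏ i ∈ Sᶜ, (-1:ℂ) ^ ((b i * σ i : Fin 2) : ℕ)) *
      (∏ i ∈ Sᶜ, (-1:ℂ) ^ ((b i * τ i : Fin 2) : ℕ)) = 1 := by
    rw [← Finset.prod_mul_distrib]
    refine Finset.prod_eq_one fun i hi => ?_
    rw [h i (Finset.mem_compl.mp hi)]
    rw [← neg_one_pow_fin_add]
    have h2 : τ i + τ i = 0 := by
      have h3 : ∀ x : Fin 2, x + x = 0 := by decide
      exact h3 (τ i)
    rw [← mul_add, h2, mul_zero]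
    simp
  calc sgn b σ * sgn b τ
      = (sgnS S b (fun i => σ i.1) * sgnS S b (fun i => τ i.1)) *
        ((∏ i ∈ Sᶜ, (-1:ℂ) ^ ((b i * σ i : Fin 2) : ℕ)) *
         (∏ i ∈ Sᶜ, (-1:ℂ) ^ ((b i * τ i : Fin 2) : ℕ))) := by rw [hσ, hτ]; ring
    _ = _ := by rw [hoff, mul_one]

/-- conjugated clause vector -/
def conjVec (S : Finset (Fin N)) (a b : Fin N → Fin 2) (φ : ({i // i ∈ S} → Fin 2) → ℂ) :
    ({i // i ∈ S} → Fin 2) → ℂ :=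
  fun x => sgnS S b x * φ (fun i => x i + a i.1)

lemma Wm_clauseProj (a b : Fin N → Fin 2) (S : Finset (Fin N))
    (φ : ({i // i ∈ S} → Fin 2) → ℂ) :
    Wm a b * clauseProj S φ * (Wm a b)ᴴ = clauseProj S (conjVec S a b φ) := by
  ext σ τ
  rw [Wm_conj_apply]
  rw [clauseProj, clauseProj]
  have hcond : (∀ i : Fin N, i ∉ S → (σ + a) i = (τ + a) i) ↔ (∀ i : Fin N, i ∉ S → σ i = τ i) := by
    constructor
    · intro h i hi
      have := h i hi
      simpa using add_right_cancel this
    · intro h i hi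
      simp [Pi.add_apply, h i hi]
  by_cases h : ∀ i : Fin N, i ∉ S → σ i = τ i
  · rw [if_pos (hcond.mpr h), if_pos h]
    rw [conjVec, conjVec]
    simp only [Pi.add_apply]
    rw [_root_.map_mul, conj_sgnS]
    have hs := sgn_mul_sgn_of_agree S b σ τ h
    calc sgn b σ * sgn b τ *
          (1 * φ (fun i => σ i.1 + a i.1) * (starRingEnd ℂ) (φ (fun i => τ i.1 + a i.1)))
        = (sgn b σ * sgn b τ) * φ (fun i => σ i.1 + a i.1) *
            (starRingEnd ℂ) (φ (fun i => τ i.1 + a i.1)) := by ring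
      _ = (sgnS S b (fun i => σ i.1) * sgnS S b (fun i => τ i.1)) *
            φ (fun i => σ i.1 + a i.1) * (starRingEnd ℂ) (φ (fun i => τ i.1 + a i.1)) := by
          rw [hs]
      _ = 1 * (sgnS S b (fun i => σ i.1) * φ (fun i => σ i.1 + a i.1)) *
            (sgnS S b (fun i => τ i.1) * (starRingEnd ℂ) (φ (fun i => τ i.1 + a i.1))) := by ring
  · rw [if_neg (fun hc => h (hcond.mp hc)), if_neg h]
    ring

lemma IsUnitVec_conjVec (S : Finset (Fin N)) (a b : Fin N → Fin 2)
    (φ : ({i // i ∈ S} → Fin 2) → ℂ) (hφ : IsUnitVec φ) :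
    IsUnitVec (conjVec S a b φ) := by
  rw [IsUnitVec]
  have h1 : ∀ x : {i // i ∈ S} → Fin 2,
      Complex.normSq (conjVec S a b φ x) = Complex.normSq (φ (x + fun i => a i.1)) := by
    intro x
    rw [conjVec, Complex.normSq_mul, normSq_sgnS, one_mul]
    rfl
  rw [Finset.sum_congr rfl fun x _ => h1 x]
  have h2 := Fintype.sum_equiv (Equiv.addRight (fun i => a i.1 : {i // i ∈ S} → Fin 2))
    (fun x => Complex.normSq (φ (x + fun i => a i.1))) (fun y => Complex.normSq (φ y))
    (fun x => rfl)
  rw [h2]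
  exact hφ

lemma qsatHam_conj {M : ℕ} (a b : Fin N → Fin 2) (S : Fin M → Finset (Fin N))
    (φ : ∀ m, ({i // i ∈ S m} → Fin 2) → ℂ) :
    qsatHam S (fun m => conjVec (S m) a b (φ m))
      = Wm a b * qsatHam S φ * (Wm a b)ᴴ := by
  rw [qsatHam, qsatHam, Matrix.mul_sum, Matrix.sum_mul]
  exact Finset.sum_congr rfl fun m _ => (Wm_clauseProj a b (S m) (φ m)).symm

/-! ### Orthonormal bases as matrices -/

lemma exists_onb_matrix (V : Submodule ℂ ((Fin N → Fin 2) → ℂ)) :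
    ∃ U : Matrix (Fin N → Fin 2) (Fin (Module.finrank ℂ V)) ℂ,
      Uᴴ * U = 1 ∧ (∀ j, (fun σ => U σ j) ∈ V) ∧
      ∀ w ∈ V, (U * Uᴴ) *ᵥ w = w := by
  classical
  let E := EuclideanSpace ℂ (Fin N → Fin 2)
  let V' : Submodule ℂ E := V.comap (WithLp.linearEquiv 2 ℂ ((Fin N → Fin 2) → ℂ)).toLinearMap
  have hrank : Module.finrank ℂ V' = Module.finrank ℂ V := by
    exact (LinearEquiv.ofSubmodules (WithLp.linearEquiv 2 ℂ ((Fin N → Fin 2) → ℂ)) V' V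
      (Submodule.map_comap_eq_of_surjective
        (WithLp.linearEquiv 2 ℂ ((Fin N → Fin 2) → ℂ)).surjective V)).finrank_eq
  let b : OrthonormalBasis (Fin (Module.finrank ℂ V)) ℂ V' :=
    (stdOrthonormalBasis ℂ V').reindex (finCongr hrank)
  refine ⟨Matrix.of (fun σ j => (b j : E) σ), ?_, ?_, ?_⟩
  · ext j j'
    have horth := orthonormal_iff_ite.mp b.orthonormal j j'
    rw [Submodule.coe_inner, PiLp.inner_apply] at horth
    rw [Matrix.mul_apply, Matrix.one_apply, ← horth]
    refine Finset.sum_congr rfl fun σ _ => ?_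
    rw [Matrix.conjTranspose_apply, Matrix.of_apply, Matrix.of_apply, RCLike.inner_apply]
    exact mul_comm _ _
  · intro j
    exact (b j).2
  · intro w hw
    set x : V' := ⟨WithLp.toLp 2 w, hw⟩ with hx
    have hrepr := b.sum_repr x
    have hcoe : ∑ j, b.repr x j • ((b j : E) : (Fin N → Fin 2) → ℂ) = w := by
      have h2 := congrArg (Subtype.val) hrepr
      have h3 := congrArg WithLp.ofLp h2
      refine Eq.trans ?_ (h3.trans rfl)
      rw [Submodule.coe_sum, WithLp.ofLp_sum]
      rfl
    funext σ
    have hw' : w σ = ∑ j, b.repr x j * (b j : E) σ := by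
      conv_lhs => rw [← hcoe]
      rw [Finset.sum_apply]
      refine Finset.sum_congr rfl fun j _ => ?_
      rfl
    rw [Matrix.mulVec, dotProduct]
    have hmul : ∀ τ, (Matrix.of (fun σ j => (b j : E) σ) *
        (Matrix.of (fun σ j => (b j : E) σ))ᴴ) σ τ * w τ
        = ∑ j, ((b j : E) σ * ((starRingEnd ℂ) ((b j : E) τ) * w τ)) := by
      intro τ
      rw [Matrix.mul_apply, Finset.sum_mul]
      refine Finset.sum_congr rfl fun j _ => ?_
      rw [Matrix.conjTranspose_apply, Matrix.of_apply, Matrix.of_apply]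
      rw [show star ((b j : E) τ) = (starRingEnd ℂ) ((b j : E) τ) from rfl]
      ring
    rw [Finset.sum_congr rfl fun τ _ => hmul τ, Finset.sum_comm]
    have hinner : ∀ j, (∑ τ, (starRingEnd ℂ) ((b j : E) τ) * w τ) = b.repr x j := by
      intro j
      rw [b.repr_apply_apply x j, Submodule.coe_inner, PiLp.inner_apply]
      refine Finset.sum_congr rfl fun τ _ => ?_
      rw [RCLike.inner_apply]
      exact mul_comm _ _
    calc ∑ j, ∑ τ, (b j : E) σ * ((starRingEnd ℂ) ((b j : E) τ) * w τ)
        = ∑ j, (b j : E) σ * ∑ τ, (starRingEnd ℂ) ((b j : E) τ) * w τ := by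
          exact Finset.sum_congr rfl fun j _ => (Finset.mul_sum _ _ _).symm
      _ = ∑ j, (b j : E) σ * b.repr x j := by
          exact Finset.sum_congr rfl fun j _ => by rw [hinner j]
      _ = w σ := by rw [hw']; exact Finset.sum_congr rfl fun j _ => mul_comm _ _

/-! ### Twirl and averaging -/

lemma sum_sgn_mul (σ τ : Fin N → Fin 2) :
    ∑ b : Fin N → Fin 2, sgn b σ * sgn b τ = if σ = τ then ((2 : ℂ) ^ N) else 0 := by
  rw [Finset.sum_congr rfl fun b _ => sgn_mul_sgn b σ τ, sum_sgn]
  congr 1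
  simp only [eq_iff_iff]
  constructor
  · intro h
    funext i
    have h1 := congrFun h i
    have h2 : ∀ x y : Fin 2, x + y = 0 → x = y := by decide
    exact h2 _ _ h1
  · intro h; subst h
    funext i
    have h3 : ∀ x : Fin 2, x + x = 0 := by decide
    exact h3 (σ i)

lemma twirl (P : Matrix (Fin N → Fin 2) (Fin N → Fin 2) ℂ) :
    ∑ a : Fin N → Fin 2, ∑ b : Fin N → Fin 2, Wm a b * P * (Wm a b)ᴴ
      = ((2 : ℂ) ^ N * Matrix.trace P) • 1 := by
  ext σ τ
  rw [Matrix.sum_apply]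
  have hin : ∀ a, (∑ b : Fin N → Fin 2, Wm a b * P * (Wm a b)ᴴ) σ τ
      = (if σ = τ then ((2:ℂ)^N) else 0) * P (σ + a) (τ + a) := by
    intro a
    rw [Matrix.sum_apply]
    rw [Finset.sum_congr rfl fun b _ => Wm_conj_apply a b P σ τ]
    rw [← Finset.sum_mul, sum_sgn_mul]
  rw [Finset.sum_congr rfl fun a _ => hin a]
  by_cases h : σ = τ
  · subst h
    simp only [if_pos rfl]
    rw [← Finset.mul_sum]
    have htr : ∑ a : Fin N → Fin 2, P (σ + a) (σ + a) = Matrix.trace P := by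
      rw [Matrix.trace]
      exact Fintype.sum_equiv (Equiv.addLeft σ) _ (fun ρ => Matrix.diag P ρ) (fun a => rfl)
    rw [htr, Matrix.smul_apply, Matrix.one_apply_eq, smul_eq_mul, mul_one, if_pos trivial]
  · simp only [if_neg h]
    rw [Matrix.smul_apply, Matrix.one_apply_ne h, smul_eq_mul, mul_zero]
    simp

lemma trace_UUH {d : ℕ} (U : Matrix (Fin N → Fin 2) (Fin d) ℂ) (h : Uᴴ * U = 1) :
    Matrix.trace (U * Uᴴ) = (d : ℂ) := by
  rw [Matrix.trace_mul_comm, h, Matrix.trace_one]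
  simp

lemma trace_MHM {d1 d2 : ℕ} (U1 : Matrix (Fin N → Fin 2) (Fin d1) ℂ)
    (U2 : Matrix (Fin N → Fin 2) (Fin d2) ℂ) (a b : Fin N → Fin 2) :
    Matrix.trace ((U1ᴴ * Wm a b * U2)ᴴ * (U1ᴴ * Wm a b * U2))
      = Matrix.trace ((U1 * U1ᴴ) * (Wm a b * (U2 * U2ᴴ) * (Wm a b)ᴴ)) := by
  have e1 : (U1ᴴ * Wm a b * U2)ᴴ * (U1ᴴ * Wm a b * U2)
      = U2ᴴ * ((Wm a b)ᴴ * (U1 * (U1ᴴ * (Wm a b * U2)))) := by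
    simp only [Matrix.conjTranspose_mul, Matrix.conjTranspose_conjTranspose, Matrix.mul_assoc]
  rw [e1, Matrix.trace_mul_comm]
  have e2 : (Wm a b)ᴴ * (U1 * (U1ᴴ * (Wm a b * U2))) * U2ᴴ
      = (Wm a b)ᴴ * (U1 * (U1ᴴ * (Wm a b * (U2 * U2ᴴ)))) := by
    simp only [Matrix.mul_assoc]
  rw [e2, Matrix.trace_mul_comm]
  have e3 : U1 * (U1ᴴ * (Wm a b * (U2 * U2ᴴ))) * (Wm a b)ᴴ
      = (U1 * U1ᴴ) * (Wm a b * (U2 * U2ᴴ) * (Wm a b)ᴴ) := by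
    simp only [Matrix.mul_assoc]
  rw [e3]

lemma sum_frob {d1 d2 : ℕ} (U1 : Matrix (Fin N → Fin 2) (Fin d1) ℂ)
    (U2 : Matrix (Fin N → Fin 2) (Fin d2) ℂ) (h1 : U1ᴴ * U1 = 1) (h2 : U2ᴴ * U2 = 1) :
    ∑ a : Fin N → Fin 2, ∑ b : Fin N → Fin 2, frob (U1ᴴ * Wm a b * U2)
      = 2 ^ N * d1 * d2 := by
  have key : ((∑ a : Fin N → Fin 2, ∑ b : Fin N → Fin 2, frob (U1ᴴ * Wm a b * U2) : ℝ) : ℂ)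
      = 2 ^ N * d1 * d2 := by
    push_cast
    rw [Finset.sum_congr rfl fun a _ => Finset.sum_congr rfl fun b _ =>
      (trace_conjTranspose_mul (U1ᴴ * Wm a b * U2)).symm]
    rw [Finset.sum_congr rfl fun a _ => Finset.sum_congr rfl fun b _ => trace_MHM U1 U2 a b]
    have hs : ∑ a : Fin N → Fin 2, ∑ b : Fin N → Fin 2,
        Matrix.trace ((U1 * U1ᴴ) * (Wm a b * (U2 * U2ᴴ) * (Wm a b)ᴴ))
        = Matrix.trace ((U1 * U1ᴴ) *
            (∑ a : Fin N → Fin 2, ∑ b : Fin N → Fin 2, Wm a b * (U2 * U2ᴴ) * (Wm a b)ᴴ)) := by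
      rw [Matrix.mul_sum, Matrix.trace_sum]
      refine Finset.sum_congr rfl fun a _ => ?_
      rw [Matrix.mul_sum, Matrix.trace_sum]
    rw [hs, twirl (U2 * U2ᴴ), trace_UUH U2 h2, Matrix.mul_smul, Matrix.mul_one,
      Matrix.trace_smul, trace_UUH U1 h1, smul_eq_mul]
    ring
  exact_mod_cast key

lemma exists_good_ab {d1 d2 : ℕ} (U1 : Matrix (Fin N → Fin 2) (Fin d1) ℂ)
    (U2 : Matrix (Fin N → Fin 2) (Fin d2) ℂ) (h1 : U1ᴴ * U1 = 1) (h2 : U2ᴴ * U2 = 1) :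
    ∃ a b : Fin N → Fin 2, frob (U1ᴴ * Wm a b * U2) ≤ (d1 * d2 : ℝ) / 2 ^ N := by
  have hcard : (Fintype.card ((Fin N → Fin 2) × (Fin N → Fin 2)) : ℝ) = 2 ^ N * 2 ^ N := by
    rw [Fintype.card_prod, Fintype.card_fun]
    push_cast
    simp
  have hsum : ∑ p : (Fin N → Fin 2) × (Fin N → Fin 2), frob (U1ᴴ * Wm p.1 p.2 * U2)
      = 2 ^ N * d1 * d2 := by
    rw [Fintype.sum_prod_type]
    exact sum_frob U1 U2 h1 h2
  have hconst : ∑ _p : (Fin N → Fin 2) × (Fin N → Fin 2), ((d1 * d2 : ℝ) / 2 ^ N)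
      = 2 ^ N * d1 * d2 := by
    rw [Finset.sum_const, Finset.card_univ, nsmul_eq_mul, hcard]
    have h2N : (2 : ℝ) ^ N ≠ 0 := by positivity
    field_simp
  obtain ⟨p, _, hp⟩ := Finset.exists_le_of_sum_le (Finset.univ_nonempty)
    (le_of_eq (hsum.trans hconst.symm))
  exact ⟨p.1, p.2, hp⟩

/-! ### Concatenation of clause lists -/

def restr {S' S : Finset (Fin N)} (h : S' = S) (x : {i // i ∈ S'} → Fin 2) :
    {i // i ∈ S} → Fin 2 := fun i => x ⟨i.1, h.symm ▸ i.2⟩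

lemma clauseProj_restr {S' S : Finset (Fin N)} (h : S' = S)
    (φ : ({i // i ∈ S} → Fin 2) → ℂ) :
    clauseProj S' (fun x => φ (restr h x)) = clauseProj S φ := by
  subst h; rfl

lemma IsUnitVec_restr {S' S : Finset (Fin N)} (h : S' = S)
    (φ : ({i // i ∈ S} → Fin 2) → ℂ) (hφ : IsUnitVec φ) :
    IsUnitVec (fun x => φ (restr h x)) := by
  subst h; exact hφ

variable {M₁ M₂ : ℕ} (S₁ : Fin M₁ → Finset (Fin N)) (S₂ : Fin M₂ → Finset (Fin N))

/-- combine clause vectors for the concatenated clause list -/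
def φcomb (φ1 : ∀ m, ({i // i ∈ S₁ m} → Fin 2) → ℂ) (φ2 : ∀ m, ({i // i ∈ S₂ m} → Fin 2) → ℂ) :
    ∀ m : Fin (M₁ + M₂), ({i // i ∈ Fin.append S₁ S₂ m} → Fin 2) → ℂ :=
  Fin.addCases
    (motive := fun m => ({i // i ∈ Fin.append S₁ S₂ m} → Fin 2) → ℂ)
    (fun i x => φ1 i (restr (Fin.append_left S₁ S₂ i) x))
    (fun i x => φ2 i (restr (Fin.append_right S₁ S₂ i) x))

lemma φcomb_unit (φ1 : ∀ m, ({i // i ∈ S₁ m} → Fin 2) → ℂ)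
    (φ2 : ∀ m, ({i // i ∈ S₂ m} → Fin 2) → ℂ)
    (h1 : ∀ m, IsUnitVec (φ1 m)) (h2 : ∀ m, IsUnitVec (φ2 m)) :
    ∀ m, IsUnitVec (φcomb S₁ S₂ φ1 φ2 m) := by
  refine Fin.addCases ?_ ?_
  · intro i
    rw [φcomb, Fin.addCases_left]
    exact IsUnitVec_restr _ _ (h1 i)
  · intro i
    rw [φcomb, Fin.addCases_right]
    exact IsUnitVec_restr _ _ (h2 i)

lemma clauseProj_comb_left (φ1 : ∀ m, ({i // i ∈ S₁ m} → Fin 2) → ℂ)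
    (φ2 : ∀ m, ({i // i ∈ S₂ m} → Fin 2) → ℂ) (i : Fin M₁) :
    clauseProj (Fin.append S₁ S₂ (Fin.castAdd M₂ i)) (φcomb S₁ S₂ φ1 φ2 (Fin.castAdd M₂ i))
      = clauseProj (S₁ i) (φ1 i) := by
  rw [φcomb, Fin.addCases_left]
  exact clauseProj_restr (Fin.append_left S₁ S₂ i) (φ1 i)

lemma clauseProj_comb_right (φ1 : ∀ m, ({i // i ∈ S₁ m} → Fin 2) → ℂ)
    (φ2 : ∀ m, ({i // i ∈ S₂ m} → Fin 2) → ℂ) (i : Fin M₂) :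
    clauseProj (Fin.append S₁ S₂ (Fin.natAdd M₁ i)) (φcomb S₁ S₂ φ1 φ2 (Fin.natAdd M₁ i))
      = clauseProj (S₂ i) (φ2 i) := by
  rw [φcomb, Fin.addCases_right]
  exact clauseProj_restr (Fin.append_right S₁ S₂ i) (φ2 i)

lemma qsatHam_append (φ1 : ∀ m, ({i // i ∈ S₁ m} → Fin 2) → ℂ)
    (φ2 : ∀ m, ({i // i ∈ S₂ m} → Fin 2) → ℂ) :
    qsatHam (Fin.append S₁ S₂) (φcomb S₁ S₂ φ1 φ2) = qsatHam S₁ φ1 + qsatHam S₂ φ2 := by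
  rw [qsatHam, Fin.sum_univ_add, qsatHam, qsatHam]
  congr 1
  · exact Finset.sum_congr rfl fun i _ => clauseProj_comb_left S₁ S₂ φ1 φ2 i
  · exact Finset.sum_congr rfl fun i _ => clauseProj_comb_right S₁ S₂ φ1 φ2 i

/-- trivial unit clause vectors -/
lemma exists_unit_vec (S : Finset (Fin N)) : ∃ φ : ({i // i ∈ S} → Fin 2) → ℂ, IsUnitVec φ := by
  classical
  refine ⟨fun x => if x = (fun _ => 0) then 1 else 0, ?_⟩
  rw [IsUnitVec]
  rw [Finset.sum_eq_single (fun _ => 0 : {i // i ∈ S} → Fin 2)]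
  · simp
  · intro y _ hy; simp [hy]
  · simp

/-- matrix-columns version of `mulVec` -/
lemma mul_col {r : ℕ} (A : Matrix (Fin N → Fin 2) (Fin N → Fin 2) ℂ)
    (B : Matrix (Fin N → Fin 2) (Fin r) ℂ) (j : Fin r) (σ : Fin N → Fin 2) :
    (A * B) σ j = (A *ᵥ (fun τ => B τ j)) σ := by
  rw [Matrix.mul_apply, Matrix.mulVec, dotProduct]

end QSatAux

open QSatAux Matrix in
/-- **Subadditivity of the minimal kernel dimension.**  If `R(G)` denotes the minimum
over all choices of (unit) clause vectors of `dim ker H_φ`, and `G₁ ∪ G₂` is the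
concatenation of the clause lists of `G₁` and `G₂`, then
`R(G₁ ∪ G₂) · 2^N ≤ R(G₁) · R(G₂)`. -/
theorem minimal_kernel_dim_subadditive (N k M₁ M₂ : ℕ)
    (S₁ : Fin M₁ → Finset (Fin N)) (S₂ : Fin M₂ → Finset (Fin N))
    (hS₁ : ∀ m, (S₁ m).card = k) (hS₂ : ∀ m, (S₂ m).card = k) :
    sInf {r : ℕ | ∃ φ : ∀ m : Fin (M₁ + M₂),
          ({i // i ∈ Fin.append S₁ S₂ m} → Fin 2) → ℂ,
        (∀ m, IsUnitVec (φ m)) ∧ kerDim (Fin.append S₁ S₂) φ = r} * 2 ^ N ≤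
      sInf {r : ℕ | ∃ φ : ∀ m : Fin M₁, ({i // i ∈ S₁ m} → Fin 2) → ℂ,
          (∀ m, IsUnitVec (φ m)) ∧ kerDim S₁ φ = r} *
      sInf {r : ℕ | ∃ φ : ∀ m : Fin M₂, ({i // i ∈ S₂ m} → Fin 2) → ℂ,
          (∀ m, IsUnitVec (φ m)) ∧ kerDim S₂ φ = r} := by
  classical
  -- the two minimization sets are nonempty
  have hne1 : {r : ℕ | ∃ φ : ∀ m : Fin M₁, ({i // i ∈ S₁ m} → Fin 2) → ℂ,
      (∀ m, IsUnitVec (φ m)) ∧ kerDim S₁ φ = r}.Nonempty := by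
    refine ⟨kerDim S₁ (fun m => (exists_unit_vec (S₁ m)).choose),
      (fun m => (exists_unit_vec (S₁ m)).choose), fun m => (exists_unit_vec (S₁ m)).choose_spec,
      rfl⟩
  have hne2 : {r : ℕ | ∃ φ : ∀ m : Fin M₂, ({i // i ∈ S₂ m} → Fin 2) → ℂ,
      (∀ m, IsUnitVec (φ m)) ∧ kerDim S₂ φ = r}.Nonempty := by
    refine ⟨kerDim S₂ (fun m => (exists_unit_vec (S₂ m)).choose),
      (fun m => (exists_unit_vec (S₂ m)).choose), fun m => (exists_unit_vec (S₂ m)).choose_spec,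
      rfl⟩
  obtain ⟨φ1, hφ1u, hφ1d⟩ := Nat.sInf_mem hne1
  obtain ⟨φ2, hφ2u, hφ2d⟩ := Nat.sInf_mem hne2
  -- the optimal kernels and their orthonormal bases
  set V1 : Submodule ℂ ((Fin N → Fin 2) → ℂ) :=
    LinearMap.ker (Matrix.mulVecLin (qsatHam S₁ φ1)) with hV1
  set V2 : Submodule ℂ ((Fin N → Fin 2) → ℂ) :=
    LinearMap.ker (Matrix.mulVecLin (qsatHam S₂ φ2)) with hV2
  obtain ⟨U1, hU1o, _, hU1fix⟩ := exists_onb_matrix V1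
  obtain ⟨U2, hU2o, _, hU2fix⟩ := exists_onb_matrix V2
  -- choose a good Weyl operator
  obtain ⟨a, b, hab⟩ := exists_good_ab U1 U2 hU1o hU2o
  -- the rotated second clause system
  set φ2' : ∀ m, ({i // i ∈ S₂ m} → Fin 2) → ℂ := fun m => conjVec (S₂ m) a b (φ2 m) with hφ2'
  have hφ2'u : ∀ m, IsUnitVec (φ2' m) := fun m => IsUnitVec_conjVec _ a b _ (hφ2u m)
  have hH2' : qsatHam S₂ φ2' = Wm a b * qsatHam S₂ φ2 * (Wm a b)ᴴ := qsatHam_conj a b S₂ φ2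
  -- the combined clause system
  set φc := φcomb S₁ S₂ φ1 φ2' with hφc
  have hφcu : ∀ m, IsUnitVec (φc m) := φcomb_unit S₁ S₂ φ1 φ2' hφ1u hφ2'u
  have hHc : qsatHam (Fin.append S₁ S₂) φc = qsatHam S₁ φ1 + qsatHam S₂ φ2' :=
    qsatHam_append S₁ S₂ φ1 φ2'
  set K : Submodule ℂ ((Fin N → Fin 2) → ℂ) :=
    LinearMap.ker (Matrix.mulVecLin (qsatHam (Fin.append S₁ S₂) φc)) with hK
  obtain ⟨Kw, hKwo, hKwmem, _⟩ := exists_onb_matrix K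
  -- columns of Kw are killed by both Hamiltonians
  have hcols : ∀ j, (qsatHam S₁ φ1) *ᵥ (fun τ => Kw τ j) = 0 ∧
      (qsatHam S₂ φ2') *ᵥ (fun τ => Kw τ j) = 0 := by
    intro j
    have hmem := hKwmem j
    rw [hK, LinearMap.mem_ker, Matrix.mulVecLin_apply] at hmem
    have hall := ker_all_clauses (Fin.append S₁ S₂) φc hφcu _ hmem
    constructor
    · rw [qsatHam, sum_mulVec']
      refine Finset.sum_eq_zero fun i _ => ?_
      have h := hall (Fin.castAdd M₂ i)
      rwa [clauseProj_comb_left S₁ S₂ φ1 φ2' i] at h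
    · rw [qsatHam, sum_mulVec']
      refine Finset.sum_eq_zero fun i _ => ?_
      have h := hall (Fin.natAdd M₁ i)
      rwa [clauseProj_comb_right S₁ S₂ φ1 φ2' i] at h
  -- matrix fixed-point identities
  have hP1Kw : (U1 * U1ᴴ) * Kw = Kw := by
    ext σ j
    rw [mul_col]
    have hmem : (fun τ => Kw τ j) ∈ V1 := by
      rw [hV1, LinearMap.mem_ker, Matrix.mulVecLin_apply]
      exact (hcols j).1
    rw [hU1fix _ hmem]
  have hP2WKw : (U2 * U2ᴴ) * ((Wm a b)ᴴ * Kw) = (Wm a b)ᴴ * Kw := by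
    ext σ j
    have hcol : (fun τ => ((Wm a b)ᴴ * Kw) τ j) = (Wm a b)ᴴ *ᵥ (fun τ => Kw τ j) := by
      funext τ; rw [mul_col]
    have hmem : ((Wm a b)ᴴ *ᵥ (fun τ => Kw τ j)) ∈ V2 := by
      rw [hV2, LinearMap.mem_ker, Matrix.mulVecLin_apply]
      have h2 := (hcols j).2
      rw [hH2'] at h2
      have h3 := congrArg (fun v => (Wm a b)ᴴ *ᵥ v) h2
      simp only [Matrix.mulVec_zero] at h3
      rw [Matrix.mulVec_mulVec] at h3
      have e : (Wm a b)ᴴ * (Wm a b * qsatHam S₂ φ2 * (Wm a b)ᴴ)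
          = qsatHam S₂ φ2 * (Wm a b)ᴴ := by
        rw [Matrix.mul_assoc (Wm a b) (qsatHam S₂ φ2) (Wm a b)ᴴ,
          ← Matrix.mul_assoc (Wm a b)ᴴ (Wm a b) (qsatHam S₂ φ2 * (Wm a b)ᴴ),
          WmH_mul_Wm, Matrix.one_mul]
      rw [e] at h3
      rw [Matrix.mulVec_mulVec]
      exact h3
    rw [mul_col, hcol, hU2fix _ hmem, ← hcol]
  -- apply the Frobenius norm bound
  have hrle : ((Module.finrank ℂ K : ℕ) : ℝ) ≤ frob (U1ᴴ * Wm a b * U2) := by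
    refine frob_lower (Kwᴴ * U1) (U2ᴴ * ((Wm a b)ᴴ * Kw)) (U1ᴴ * Wm a b * U2) ?_ ?_ ?_
    · rw [Matrix.conjTranspose_mul, Matrix.conjTranspose_conjTranspose,
        Matrix.mul_assoc Kwᴴ U1 (U1ᴴ * Kw), ← Matrix.mul_assoc U1 U1ᴴ Kw, hP1Kw, hKwo]
    · have e0 : (U2ᴴ * ((Wm a b)ᴴ * Kw))ᴴ * (U2ᴴ * ((Wm a b)ᴴ * Kw))
          = Kwᴴ * (Wm a b * (U2 * (U2ᴴ * ((Wm a b)ᴴ * Kw)))) := by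
        simp only [Matrix.conjTranspose_mul, Matrix.conjTranspose_conjTranspose,
          Matrix.mul_assoc]
      rw [e0, ← Matrix.mul_assoc U2 U2ᴴ ((Wm a b)ᴴ * Kw), hP2WKw,
        ← Matrix.mul_assoc (Wm a b) (Wm a b)ᴴ Kw, Wm_mul_WmH, Matrix.one_mul, hKwo]
    · have e : Kwᴴ * U1 * (U1ᴴ * Wm a b * U2) * (U2ᴴ * ((Wm a b)ᴴ * Kw))
          = Kwᴴ * (U1 * (U1ᴴ * (Wm a b * (U2 * (U2ᴴ * ((Wm a b)ᴴ * Kw)))))) := by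
        simp only [Matrix.mul_assoc]
      rw [e, ← Matrix.mul_assoc U2 U2ᴴ ((Wm a b)ᴴ * Kw), hP2WKw,
        ← Matrix.mul_assoc (Wm a b) (Wm a b)ᴴ Kw, Wm_mul_WmH, Matrix.one_mul,
        ← Matrix.mul_assoc U1 U1ᴴ Kw, hP1Kw, hKwo]
  -- numerical conclusion
  have hfinal : (Module.finrank ℂ K) * 2 ^ N ≤
      Module.finrank ℂ V1 * Module.finrank ℂ V2 := by
    have h2N : (0 : ℝ) < 2 ^ N := by positivity
    have hr2 : ((Module.finrank ℂ K : ℕ) : ℝ) * 2 ^ N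
        ≤ (Module.finrank ℂ V1 : ℝ) * (Module.finrank ℂ V2 : ℝ) := by
      have := le_trans hrle hab
      calc ((Module.finrank ℂ K : ℕ) : ℝ) * 2 ^ N
          ≤ ((Module.finrank ℂ V1 * Module.finrank ℂ V2 : ℝ) / 2 ^ N) * 2 ^ N := by
            exact mul_le_mul_of_nonneg_right this (le_of_lt h2N)
        _ = (Module.finrank ℂ V1 : ℝ) * (Module.finrank ℂ V2 : ℝ) := by
            field_simp
    exact_mod_cast hr2
  -- the combined system witnesses membership
  have hmemU : kerDim (Fin.append S₁ S₂) φc ∈ {r : ℕ | ∃ φ : ∀ m : Fin (M₁ + M₂),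
      ({i // i ∈ Fin.append S₁ S₂ m} → Fin 2) → ℂ,
      (∀ m, IsUnitVec (φ m)) ∧ kerDim (Fin.append S₁ S₂) φ = r} := ⟨φc, hφcu, rfl⟩
  have hsInf_le : sInf {r : ℕ | ∃ φ : ∀ m : Fin (M₁ + M₂),
      ({i // i ∈ Fin.append S₁ S₂ m} → Fin 2) → ℂ,
      (∀ m, IsUnitVec (φ m)) ∧ kerDim (Fin.append S₁ S₂) φ = r}
      ≤ kerDim (Fin.append S₁ S₂) φc := Nat.sInf_le hmemU
  have hkerc : kerDim (Fin.append S₁ S₂) φc = Module.finrank ℂ K := rfl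
  have hd1 : Module.finrank ℂ V1 = sInf {r : ℕ | ∃ φ : ∀ m : Fin M₁,
      ({i // i ∈ S₁ m} → Fin 2) → ℂ, (∀ m, IsUnitVec (φ m)) ∧ kerDim S₁ φ = r} := hφ1d
  have hd2 : Module.finrank ℂ V2 = sInf {r : ℕ | ∃ φ : ∀ m : Fin M₂,
      ({i // i ∈ S₂ m} → Fin 2) → ℂ, (∀ m, IsUnitVec (φ m)) ∧ kerDim S₂ φ = r} := hφ2d
  calc sInf _ * 2 ^ N ≤ kerDim (Fin.append S₁ S₂) φc * 2 ^ N :=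
        Nat.mul_le_mul_right _ hsInf_le
    _ = Module.finrank ℂ K * 2 ^ N := by rw [hkerc]
    _ ≤ Module.finrank ℂ V1 * Module.finrank ℂ V2 := hfinal
    _ = _ := by rw [hd1, hd2]

end
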